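/- Let M_OOD be a real symmetric positive semidefinite d×d matrix with eigenvalues λ_1 ≥ … ≥ λ_d, let 1 ≤ r < d, and suppose γ_OOD := λ_r(M_OOD) − λ_{r+1}(M_OOD) > 0. Let Π_OOD be the orthogonal projector onto the span of eigenvectors of M_OOD corresponding to its r largest eigenvalues, and define the loss L(Π) := tr[(I − Π)·M_OOD] for any d×d matrix Π. Let Π_ID be any d×d rank-r orthogonal projection matrix, and suppose the GAE projector satisfies Π_GAE = Π_OOD (i.e., the estimated OOD subspace equals the true one). Then L(Π_GAE) ≤ L(Π_ID) − (γ_OOD/2)·‖Π_OOD − Π_ID‖_F². -/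

import Mathlib

open Matrix BigOperators

/-- Frobenius norm of a real matrix. -/
noncomputable def frobNorm {m n : ℕ} (A : Matrix (Fin m) (Fin n) ℝ) : ℝ :=
  Real.sqrt (∑ i, ∑ j, (A i j) ^ 2)

section GAEAux
variable {d : ℕ}

private lemma quad_nonneg (Q : Matrix (Fin d) (Fin d) ℝ) (hs : Q.IsSymm) (hi : Q * Q = Q)
    (v : Fin d → ℝ) : 0 ≤ v ⬝ᵥ Q.mulVec v := by
  have hQ : Q = Qᵀ * Q := by rw [hs.eq, hi]
  rw [hQ, ← Matrix.mulVec_mulVec, Matrix.dotProduct_mulVec, Matrix.vecMul_transpose]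
  exact Finset.sum_nonneg fun i _ => mul_self_nonneg _

private lemma trace_eq_sum_dot (u : Fin d → Fin d → ℝ)
    (hu : ∀ i j, u i ⬝ᵥ u j = if i = j then (1:ℝ) else 0)
    (A : Matrix (Fin d) (Fin d) ℝ) :
    A.trace = ∑ i, u i ⬝ᵥ A.mulVec (u i) := by
  classical
  set U : Matrix (Fin d) (Fin d) ℝ := Matrix.of u with hU
  have hUUt : U * Uᵀ = 1 := by
    ext i j
    simpa [hU, Matrix.mul_apply, Matrix.one_apply, dotProduct] using hu i j
  have hUtU : Uᵀ * U = 1 := mul_eq_one_comm.mp hUUt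
  have h1 : A.trace = ((U * A) * Uᵀ).trace := by
    rw [Matrix.trace_mul_comm, ← Matrix.mul_assoc, hUtU, one_mul]
  rw [h1, Matrix.trace]
  apply Finset.sum_congr rfl
  intro i _
  simp only [Matrix.diag_apply, Matrix.mul_apply, Matrix.transpose_apply, dotProduct,
    Matrix.mulVec, hU, Matrix.of_apply, Finset.sum_mul, Finset.mul_sum]
  rw [Finset.sum_comm]
  apply Finset.sum_congr rfl
  intro j _
  apply Finset.sum_congr rfl
  intro k _
  ring

private lemma trace_eq_rank (P : Matrix (Fin d) (Fin d) ℝ) (hs : P.IsSymm) (hi : P * P = P) :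
    P.trace = (P.rank : ℝ) := by
  classical
  have hH : P.IsHermitian := by
    have := hs.eq
    ext i j
    simp only [Matrix.conjTranspose_apply, star_trivial]
    exact congrFun (congrFun this j) i |>.symm ▸ rfl
  set ev := hH.eigenvalues with hev
  have hev01 : ∀ i, ev i = 0 ∨ ev i = 1 := by
    intro i
    have hv := hH.mulVec_eigenvectorBasis i
    have hvv : P *ᵥ (P *ᵥ ⇑(hH.eigenvectorBasis i)) = (ev i * ev i) • ⇑(hH.eigenvectorBasis i) := by
      rw [hv, Matrix.mulVec_smul, hv, smul_smul]
    rw [Matrix.mulVec_mulVec, hi, hv] at hvv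
    have hvne : ⇑(hH.eigenvectorBasis i) ≠ 0 := by
      intro h0
      have h1 : (hH.eigenvectorBasis i : EuclideanSpace ℝ (Fin d)) = 0 := by
        apply PiLp.ext; intro j; exact congrFun h0 j
      have := hH.eigenvectorBasis.orthonormal.1 i
      rw [h1] at this; simp at this
    have : (ev i - ev i * ev i) • ⇑(hH.eigenvectorBasis i) = 0 := by
      rw [sub_smul, hvv, sub_self]
    rcases smul_eq_zero.mp this with h | h
    · have : ev i * (ev i - 1) = 0 := by ring_nf; ring_nf at h; linarith
      rcases mul_eq_zero.mp this with h' | h'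
      · exact Or.inl h'
      · exact Or.inr (by linarith)
    · exact absurd h hvne
  have htr : P.trace = ∑ i, ev i := by
    conv_lhs => rw [hH.spectral_theorem]
    rw [Unitary.conjStarAlgAut_apply, Matrix.trace_mul_comm, ← Matrix.mul_assoc,
      Matrix.mem_unitaryGroup_iff'.mp (hH.eigenvectorUnitary).2, one_mul]
    simp [Matrix.trace_diagonal, hev]
  have hrank : P.rank = Fintype.card {i // ev i ≠ 0} := hH.rank_eq_card_non_zero_eigs
  rw [htr, hrank, Fintype.card_subtype]
  rw [Finset.card_filter]
  push_cast
  apply Finset.sum_congr rfl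
  intro i _
  rcases hev01 i with h | h <;> simp [h]

end GAEAux

/-- **Theorem 1 (Improvement over ID Explainer).**
Let `M_OOD` be real symmetric PSD with eigenvalues `lam` in nonincreasing order along an
orthonormal eigenbasis `u`, `1 ≤ r < d`, positive eigengap
`γ_OOD = λ_r(M_OOD) − λ_{r+1}(M_OOD)`, and `P_OOD` the top-`r` eigenprojector. If `P_ID` is any
rank-`r` orthogonal projection matrix and the GAE projector satisfies `P_GAE = P_OOD`, then with
`L(P) = tr[(I − P)·M_OOD]` we have
`L(P_GAE) ≤ L(P_ID) − (γ_OOD/2)·‖P_OOD − P_ID‖_F²`. -/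
theorem gae_improvement_over_id_explainer
    {d r : ℕ} (hr : 1 ≤ r) (hrd : r < d)
    (M_OOD : Matrix (Fin d) (Fin d) ℝ) (hM : M_OOD.PosSemidef)
    (lam : Fin d → ℝ) (hlam : Antitone lam)
    (u : Fin d → Fin d → ℝ)
    (hu : ∀ i j, u i ⬝ᵥ u j = if i = j then (1 : ℝ) else 0)
    (heig : ∀ i, M_OOD.mulVec (u i) = lam i • u i)
    (P_OOD : Matrix (Fin d) (Fin d) ℝ)
    (hPOOD : P_OOD = ∑ i ∈ Finset.univ.filter (fun i : Fin d => (i : ℕ) < r),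
      vecMulVec (u i) (u i))
    (hgap : 0 < lam ⟨r - 1, by omega⟩ - lam ⟨r, hrd⟩)
    (P_ID : Matrix (Fin d) (Fin d) ℝ)
    (hPIDsymm : P_ID.IsSymm) (hPIDidem : P_ID * P_ID = P_ID) (hPIDrank : P_ID.rank = r)
    (P_GAE : Matrix (Fin d) (Fin d) ℝ) (hGAE : P_GAE = P_OOD) :
    Matrix.trace ((1 - P_GAE) * M_OOD) ≤
      Matrix.trace ((1 - P_ID) * M_OOD) -
        ((lam ⟨r - 1, by omega⟩ - lam ⟨r, hrd⟩) / 2) * frobNorm (P_OOD - P_ID) ^ 2 := by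
  classical
  rw [hGAE]
  set S : Finset (Fin d) := Finset.univ.filter (fun i : Fin d => (i : ℕ) < r) with hS
  -- cardinality of S
  have hcard : S.card = r := by
    rw [hS, Finset.card_filter,
      Fin.sum_univ_eq_sum_range (fun n => if n < r then 1 else 0), ← Finset.card_filter]
    have : (Finset.range d).filter (fun n => n < r) = Finset.range r := by
      ext n; simp only [Finset.mem_filter, Finset.mem_range]; omega
    rw [this, Finset.card_range]
  -- action of P_OOD on the basis
  have hPmul : ∀ i : Fin d, P_OOD *ᵥ u i = if (i : ℕ) < r then u i else 0 := by
    intro i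
    have h1 : P_OOD *ᵥ u i = ∑ j ∈ S, (vecMulVec (u j) (u j)) *ᵥ u i := by
      rw [hPOOD]
      ext k
      simp only [Matrix.mulVec, dotProduct, Matrix.sum_apply, Finset.sum_mul, Finset.sum_apply]
      rw [Finset.sum_comm]
    have h2 : ∀ j, (vecMulVec (u j) (u j)) *ᵥ u i = (u j ⬝ᵥ u i) • u j := by
      intro j; ext k
      simp only [Matrix.mulVec, dotProduct, Matrix.vecMulVec_apply, Pi.smul_apply,
        smul_eq_mul, Finset.sum_mul]
      apply Finset.sum_congr rfl
      intro x _; ring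
    rw [h1]
    simp only [h2, hu]
    have h3 : ∀ j ∈ S, (if j = i then (1:ℝ) else 0) • u j = if j = i then u i else 0 := by
      intro j _; by_cases h : j = i <;> simp [h]
    rw [Finset.sum_congr rfl h3, Finset.sum_ite_eq' S i (fun _ => u i)]
    by_cases h : (i : ℕ) < r <;> simp [hS, h]
  -- quadratic form values
  set p : Fin d → ℝ := fun i => u i ⬝ᵥ P_ID *ᵥ u i with hp
  have hp0 : ∀ i, 0 ≤ p i := fun i => quad_nonneg P_ID hPIDsymm hPIDidem (u i)
  have hp1 : ∀ i, p i ≤ 1 := by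
    intro i
    have hsymm : (1 - P_ID).IsSymm := by
      rw [Matrix.IsSymm, Matrix.transpose_sub, Matrix.transpose_one, hPIDsymm.eq]
    have hidem : (1 - P_ID) * (1 - P_ID) = 1 - P_ID := by
      have hx : (1 - P_ID) * (1 - P_ID) = 1 - P_ID - P_ID + P_ID * P_ID := by noncomm_ring
      rw [hx, hPIDidem]; abel
    have h2 : (0:ℝ) ≤ 1 - p i := by
      have h := quad_nonneg (1 - P_ID) hsymm hidem (u i)
      rwa [Matrix.sub_mulVec, Matrix.one_mulVec, dotProduct_sub, hu i i, if_pos rfl] at h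
    linarith
  -- trace formulas
  have tsum := trace_eq_sum_dot u hu
  have htrPID : ∑ i, p i = (r : ℝ) := by
    have h1 := (tsum P_ID).symm
    rw [trace_eq_rank P_ID hPIDsymm hPIDidem, hPIDrank] at h1
    exact h1
  have htrPIDM : Matrix.trace (P_ID * M_OOD) = ∑ i, lam i * p i := by
    rw [tsum]
    apply Finset.sum_congr rfl
    intro i _
    rw [← Matrix.mulVec_mulVec, heig i, Matrix.mulVec_smul, dotProduct_smul]
    rfl
  have htrPOODM : Matrix.trace (P_OOD * M_OOD) = ∑ i ∈ S, lam i := by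
    rw [tsum, Finset.sum_filter]
    apply Finset.sum_congr rfl
    intro i _
    rw [← Matrix.mulVec_mulVec, heig i, Matrix.mulVec_smul, dotProduct_smul, hPmul i]
    by_cases h : (i : ℕ) < r <;> simp [h, hu i i]
  have htrPOOD2 : Matrix.trace (P_OOD * P_OOD) = (r : ℝ) := by
    rw [tsum]
    have heach : ∀ i : Fin d, u i ⬝ᵥ (P_OOD * P_OOD) *ᵥ u i
        = if (i : ℕ) < r then 1 else 0 := by
      intro i
      rw [← Matrix.mulVec_mulVec, hPmul i]
      by_cases h : (i : ℕ) < r <;> simp [h, hPmul i, hu i i]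
    rw [Finset.sum_congr rfl fun i _ => heach i, ← Finset.sum_filter, ← hS]
    simp [hcard]
  have htrCross : Matrix.trace (P_OOD * P_ID) = ∑ i ∈ S, p i := by
    rw [Matrix.trace_mul_comm, tsum, Finset.sum_filter]
    apply Finset.sum_congr rfl
    intro i _
    rw [← Matrix.mulVec_mulVec, hPmul i]
    by_cases h : (i : ℕ) < r <;> simp [h, hp]
  have htrPID2 : Matrix.trace (P_ID * P_ID) = (r : ℝ) := by
    rw [hPIDidem, ← htrPID, tsum]
  -- Frobenius norm squared
  have hPOODsymm : P_OODᵀ = P_OOD := by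
    rw [hPOOD, Matrix.transpose_sum]
    apply Finset.sum_congr rfl
    intro i _
    ext j k
    simp [Matrix.vecMulVec_apply, mul_comm]
  have hfrobsq : frobNorm (P_OOD - P_ID) ^ 2 = 2 * ∑ i ∈ S, (1 - p i) := by
    have hnn : (0:ℝ) ≤ ∑ i, ∑ j, ((P_OOD - P_ID) i j) ^ 2 :=
      Finset.sum_nonneg fun i _ => Finset.sum_nonneg fun j _ => sq_nonneg _
    have h1 : frobNorm (P_OOD - P_ID) ^ 2 = ∑ i, ∑ j, ((P_OOD - P_ID) i j) ^ 2 :=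
      Real.sq_sqrt hnn
    have h2 : ∑ i, ∑ j, ((P_OOD - P_ID) i j) ^ 2
        = Matrix.trace ((P_OOD - P_ID)ᵀ * (P_OOD - P_ID)) := by
      simp only [Matrix.trace, Matrix.diag_apply, Matrix.mul_apply, Matrix.transpose_apply, sq]
      rw [Finset.sum_comm]
    have h3 : (P_OOD - P_ID)ᵀ = P_OOD - P_ID := by
      rw [Matrix.transpose_sub, hPOODsymm, hPIDsymm.eq]
    have h4 : (P_OOD - P_ID) * (P_OOD - P_ID)
        = P_OOD * P_OOD - P_OOD * P_ID - P_ID * P_OOD + P_ID * P_ID := by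
      noncomm_ring
    have h5 : ∑ i ∈ S, (1 - p i) = (r : ℝ) - ∑ i ∈ S, p i := by
      rw [Finset.sum_sub_distrib, Finset.sum_const, hcard]; simp
    rw [h1, h2, h3, h4, Matrix.trace_add, Matrix.trace_sub, Matrix.trace_sub,
      htrPOOD2, htrCross, Matrix.trace_mul_comm P_ID P_OOD, htrCross, htrPID2, h5]
    ring
  -- the balance identity
  have hbal : ∑ i ∈ Finset.univ.filter (fun i : Fin d => ¬ (i : ℕ) < r), p i
      = ∑ i ∈ S, (1 - p i) := by
    have hsplit := Finset.sum_filter_add_sum_filter_not Finset.univ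
      (fun i : Fin d => (i : ℕ) < r) p
    have h5 : ∑ i ∈ S, (1 - p i) = (r : ℝ) - ∑ i ∈ S, p i := by
      rw [Finset.sum_sub_distrib, Finset.sum_const, hcard]; simp
    rw [h5]
    rw [htrPID] at hsplit
    rw [← hS] at hsplit
    linarith [hsplit]
  -- eigenvalue bounds
  have hlow : ∀ i ∈ S, lam (⟨r - 1, by omega⟩ : Fin d) ≤ lam i := by
    intro i hi
    rw [hS, Finset.mem_filter] at hi
    exact hlam (by rw [Fin.le_def]; simp; omega)
  have hhigh : ∀ i ∈ Finset.univ.filter (fun i : Fin d => ¬ (i : ℕ) < r),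
      lam i ≤ lam (⟨r, hrd⟩ : Fin d) := by
    intro i hi
    rw [Finset.mem_filter] at hi
    exact hlam (by rw [Fin.le_def]; simp; omega)
  -- key inequality
  have hkey : (lam ⟨r - 1, by omega⟩ - lam ⟨r, hrd⟩) * ∑ i ∈ S, (1 - p i)
      ≤ Matrix.trace (P_OOD * M_OOD) - Matrix.trace (P_ID * M_OOD) := by
    rw [htrPOODM, htrPIDM]
    rw [← Finset.sum_filter_add_sum_filter_not Finset.univ
      (fun i : Fin d => (i : ℕ) < r) (fun i => lam i * p i), ← hS]
    have e1 : lam (⟨r - 1, by omega⟩ : Fin d) * ∑ i ∈ S, (1 - p i)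
        ≤ ∑ i ∈ S, lam i * (1 - p i) := by
      rw [Finset.mul_sum]
      apply Finset.sum_le_sum
      intro i hi
      exact mul_le_mul_of_nonneg_right (hlow i hi) (by linarith [hp1 i])
    have e2 : ∑ i ∈ Finset.univ.filter (fun i : Fin d => ¬ (i : ℕ) < r), lam i * p i
        ≤ lam (⟨r, hrd⟩ : Fin d)
          * ∑ i ∈ Finset.univ.filter (fun i : Fin d => ¬ (i : ℕ) < r), p i := by
      rw [Finset.mul_sum]
      apply Finset.sum_le_sum
      intro i hi
      exact mul_le_mul_of_nonneg_right (hhigh i hi) (hp0 i)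
    have e3 : ∑ i ∈ S, lam i * (1 - p i) = ∑ i ∈ S, lam i - ∑ i ∈ S, lam i * p i := by
      rw [← Finset.sum_sub_distrib]
      apply Finset.sum_congr rfl
      intro i _; ring
    rw [hbal] at e2
    rw [e3] at e1
    linarith [e1, e2]
  -- conclude
  have hexp : ∀ P : Matrix (Fin d) (Fin d) ℝ,
      Matrix.trace ((1 - P) * M_OOD) = Matrix.trace M_OOD - Matrix.trace (P * M_OOD) := by
    intro P
    rw [sub_mul, one_mul, Matrix.trace_sub]
  rw [hexp, hexp, hfrobsq]
  have := hkey
  nlinarith [hkey]
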